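/- Let $R$ be a ring, let $C$, $D_1$, $D_2$ be chain complexes of $R$-modules, and let $f : C \to D_1 \oplus D_2$ be a chain map such that the composition $\pi_1 \circ f : C \to D_1$ with the projection onto the first summand is an isomorphism of chain complexes. Then the mapping cone $\operatorname{Cone}(f)$ is chain homotopy equivalent to $D_2$. -/

import Mathlib

/-- **Cancellation principle for mapping cones.**
Let `R` be a ring, `C`, `D₁`, `D₂` chain complexes of `R`-modules and
`f : C → D₁ ⊕ D₂` a chain map such that the composition `π₁ ∘ f : C → D₁` with the
projection onto the first summand is an isomorphism of chain complexes.  Then the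
mapping cone `Cone(f)` (with `Cone(f)ₙ = C_{n-1} ⊕ (D₁ ⊕ D₂)ₙ` and differential
`(c, a, b) ↦ (-d c, f(c) + d(a, b))`, here realized in cone degree `n+1` as
`K n := C n × D₁ (n+1) × D₂ (n+1)`) is chain homotopy equivalent to `D₂`. -/
theorem cone_of_split_iso_component_homotopy_equiv
    (R : Type) [Ring R]
    (C D₁ D₂ : ℤ → Type)
    [∀ n, AddCommGroup (C n)] [∀ n, Module R (C n)]
    [∀ n, AddCommGroup (D₁ n)] [∀ n, Module R (D₁ n)]
    [∀ n, AddCommGroup (D₂ n)] [∀ n, Module R (D₂ n)]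
    (dC : ∀ n : ℤ, C (n + 1) →ₗ[R] C n)
    (d₁ : ∀ n : ℤ, D₁ (n + 1) →ₗ[R] D₁ n)
    (d₂ : ∀ n : ℤ, D₂ (n + 1) →ₗ[R] D₂ n)
    (hdC : ∀ n, (dC n).comp (dC (n + 1)) = 0)
    (hd₁ : ∀ n, (d₁ n).comp (d₁ (n + 1)) = 0)
    (hd₂ : ∀ n, (d₂ n).comp (d₂ (n + 1)) = 0)
    -- the chain map f : C → D₁ ⊕ D₂
    (f : ∀ n : ℤ, C n →ₗ[R] D₁ n × D₂ n)
    (hf : ∀ (n : ℤ) (x : C (n + 1)),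
      f n (dC n x) = (d₁ n (f (n + 1) x).1, d₂ n (f (n + 1) x).2))
    -- π₁ ∘ f is an isomorphism of chain complexes
    (hiso : ∀ n : ℤ, Function.Bijective fun x : C n => (f n x).1)
    -- the differential of the mapping cone of f
    (DK : ∀ n : ℤ,
      (C (n + 1) × D₁ (n + 1 + 1) × D₂ (n + 1 + 1)) →ₗ[R]
        (C n × D₁ (n + 1) × D₂ (n + 1)))
    (hDK : ∀ (n : ℤ) (c : C (n + 1)) (a : D₁ (n + 1 + 1)) (b : D₂ (n + 1 + 1)),
      DK n (c, a, b) =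
        (-(dC n c), (f (n + 1) c).1 + d₁ (n + 1) a, (f (n + 1) c).2 + d₂ (n + 1) b)) :
    -- conclusion: Cone(f) is chain homotopy equivalent to D₂
    ∃ (φ : ∀ n : ℤ, (C n × D₁ (n + 1) × D₂ (n + 1)) →ₗ[R] D₂ (n + 1))
      (ψ : ∀ n : ℤ, D₂ (n + 1) →ₗ[R] (C n × D₁ (n + 1) × D₂ (n + 1))),
      -- φ and ψ are chain maps
      (∀ n, (φ n).comp (DK n) = (d₂ (n + 1)).comp (φ (n + 1))) ∧
      (∀ n, (ψ n).comp (d₂ (n + 1)) = (DK n).comp (ψ (n + 1))) ∧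
      -- ψ ∘ φ is chain homotopic to the identity of Cone(f)
      (∃ H : ∀ n : ℤ,
          (C n × D₁ (n + 1) × D₂ (n + 1)) →ₗ[R]
            (C (n + 1) × D₁ (n + 1 + 1) × D₂ (n + 1 + 1)),
        ∀ n, (ψ (n + 1)).comp (φ (n + 1)) - LinearMap.id
          = (DK (n + 1)).comp (H (n + 1)) + (H n).comp (DK n)) ∧
      -- φ ∘ ψ is chain homotopic to the identity of D₂
      (∃ H' : ∀ n : ℤ, D₂ (n + 1) →ₗ[R] D₂ (n + 1 + 1),
        ∀ n, (φ (n + 1)).comp (ψ (n + 1)) - LinearMap.id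
          = (d₂ (n + 1 + 1)).comp (H' (n + 1)) + (H' n).comp (d₂ (n + 1))) := by
  classical
  set g : ∀ n : ℤ, C n ≃ₗ[R] D₁ n := fun n =>
    LinearEquiv.ofBijective ((LinearMap.fst R (D₁ n) (D₂ n)).comp (f n)) (by
      exact hiso n) with hg
  have hgapp : ∀ (n : ℤ) (x : C n), g n x = (f n x).1 := fun n x => rfl
  have hge : ∀ (n : ℤ) (a : D₁ n), (f n ((g n).symm a)).1 = a := fun n a => by
    have := (g n).apply_symm_apply a
    simpa [hgapp] using this
  have hsymm : ∀ (n : ℤ) (x : C n), (g n).symm ((f n x).1) = x := fun n x => by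
    rw [← hgapp, (g n).symm_apply_apply]
  have hf1 : ∀ (n : ℤ) (x : C (n + 1)), (f n (dC n x)).1 = d₁ n (f (n + 1) x).1 :=
    fun n x => by rw [hf n x]
  have hf2 : ∀ (n : ℤ) (x : C (n + 1)), (f n (dC n x)).2 = d₂ n (f (n + 1) x).2 :=
    fun n x => by rw [hf n x]
  have hcomm : ∀ (n : ℤ) (a : D₁ (n + 1)),
      dC n ((g (n + 1)).symm a) = (g n).symm (d₁ n a) := by
    intro n a
    apply (g n).injective
    rw [(g n).apply_symm_apply, hgapp, hf1, hge]
  refine ⟨fun n =>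
    { toFun := fun p => p.2.2 - (f (n + 1) ((g (n + 1)).symm p.2.1)).2
      map_add' := by intro p q; simp only [Prod.snd_add, Prod.fst_add, map_add]; abel
      map_smul' := by intro r p; simp [smul_sub] },
    fun n => LinearMap.prod 0 (LinearMap.prod 0 LinearMap.id), ?_, ?_, ?_, ?_⟩
  · -- φ is a chain map
    intro n
    apply LinearMap.ext
    rintro ⟨c, a, b⟩
    simp only [LinearMap.comp_apply, LinearMap.coe_mk, AddHom.coe_mk, hDK]
    rw [show ((f (n + 1)) c).1 + d₁ (n + 1) a
        = g (n + 1) c + d₁ (n + 1) a by rw [hgapp]]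
    rw [map_add, (g (n + 1)).symm_apply_apply, ← hcomm]
    simp only [map_add, map_sub, Prod.snd_add, hf2]
    abel
  · -- ψ is a chain map
    intro n
    apply LinearMap.ext
    intro b
    simp [hDK]
  · -- homotopy ψφ ≃ id
    refine ⟨fun n => LinearMap.prod
      (-(((g (n + 1)).symm.toLinearMap.comp
          (LinearMap.fst R (D₁ (n + 1)) (D₂ (n + 1)))).comp
          (LinearMap.snd R (C n) (D₁ (n + 1) × D₂ (n + 1)))))
      (LinearMap.prod 0 0), ?_⟩
    intro n
    apply LinearMap.ext
    rintro ⟨c, a, b⟩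
    simp only [LinearMap.sub_apply, LinearMap.add_apply, LinearMap.comp_apply,
      LinearMap.id_apply, LinearMap.prod_apply, Pi.prod, LinearMap.coe_mk,
      AddHom.coe_mk, LinearMap.neg_apply, LinearMap.coe_comp, Function.comp_apply,
      LinearMap.fst_apply, LinearMap.snd_apply, LinearMap.zero_apply,
      LinearEquiv.coe_coe, hDK]
    refine Prod.ext ?_ (Prod.ext ?_ ?_)
    · simp [hcomm, hsymm, hge]
    · simp [hcomm, hsymm, hge]
    · simp [hcomm, hsymm, hge]
  · -- homotopy φψ ≃ id
    refine ⟨fun _ => 0, ?_⟩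
    intro n
    apply LinearMap.ext
    intro b
    simp
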